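/- For p ∈ ℝ³ with p ≠ 0, let U(p) = a₊(p)·I₄ + a₋(p)·β·(α·p)/|p| with a±(p) = √((1 ± 1/λ(p))/2) and λ(p) = √(|p|² + 1). Then U(p)·(α·p + β)·U(p)⁻¹ = λ(p)·β, i.e. U(p) diagonalizes the free Dirac symbol. -/

import Mathlib

open Matrix Complex

noncomputable section

/-- The Pauli–Dirac matrix β = diag(I₂, −I₂). -/
def diracBeta : Matrix (Fin 4) (Fin 4) ℂ :=
  !![1, 0, 0, 0; 0, 1, 0, 0; 0, 0, -1, 0; 0, 0, 0, -1]

/-- The Pauli–Dirac matrices αₖ = [[0, σₖ], [σₖ, 0]] for k = 1, 2, 3. -/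
def diracAlpha : Fin 3 → Matrix (Fin 4) (Fin 4) ℂ
  | 0 => !![0, 0, 0, 1; 0, 0, 1, 0; 0, 1, 0, 0; 1, 0, 0, 0]
  | 1 => !![0, 0, 0, -I; 0, 0, I, 0; 0, -I, 0, 0; I, 0, 0, 0]
  | 2 => !![0, 0, 1, 0; 0, 0, 0, -1; 1, 0, 0, 0; 0, -1, 0, 0]

/-- α·p = α₁p₁ + α₂p₂ + α₃p₃. -/
def alphaDot (p : EuclideanSpace ℝ (Fin 3)) : Matrix (Fin 4) (Fin 4) ℂ :=
  ∑ k : Fin 3, (p k : ℂ) • diracAlpha k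

/-- λ(p) = √(|p|² + 1). -/
def lam (p : EuclideanSpace ℝ (Fin 3)) : ℝ :=
  Real.sqrt (‖p‖ ^ 2 + 1)

/-- a₊(p) = √((1 + 1/λ(p))/2). -/
def aplus (p : EuclideanSpace ℝ (Fin 3)) : ℝ :=
  Real.sqrt ((1 + 1 / lam p) / 2)

/-- a₋(p) = √((1 − 1/λ(p))/2). -/
def aminus (p : EuclideanSpace ℝ (Fin 3)) : ℝ :=
  Real.sqrt ((1 - 1 / lam p) / 2)

/-- U(p) = a₊(p)·I₄ + a₋(p)·β·(α·p)/|p|. -/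
def Umat (p : EuclideanSpace ℝ (Fin 3)) : Matrix (Fin 4) (Fin 4) ℂ :=
  (aplus p : ℂ) • (1 : Matrix (Fin 4) (Fin 4) ℂ) +
    ((aminus p / ‖p‖ : ℝ) : ℂ) • (diracBeta * alphaDot p)


/-- The symbol D̂₀(p) = α·p + β of the free Dirac operator. -/
def diracSym (p : EuclideanSpace ℝ (Fin 3)) : Matrix (Fin 4) (Fin 4) ℂ :=
  alphaDot p + diracBeta

/- ### Auxiliary lemmas -/

lemma alphaDot_eq (p : EuclideanSpace ℝ (Fin 3)) :
    alphaDot p = !![0, 0, (p 2 : ℂ), (p 0 : ℂ) - (p 1 : ℂ) * I;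
      0, 0, (p 0 : ℂ) + (p 1 : ℂ) * I, -(p 2 : ℂ);
      (p 2 : ℂ), (p 0 : ℂ) - (p 1 : ℂ) * I, 0, 0;
      (p 0 : ℂ) + (p 1 : ℂ) * I, -(p 2 : ℂ), 0, 0] := by
  ext i j
  fin_cases i <;> fin_cases j <;>
    simp [alphaDot, diracAlpha, Fin.sum_univ_three, Matrix.vecHead, Matrix.vecTail] <;> ring

lemma normsq_eq (p : EuclideanSpace ℝ (Fin 3)) :
    ((‖p‖ : ℂ))^2 = (p 0 : ℂ)^2 + (p 1 : ℂ)^2 + (p 2 : ℂ)^2 := by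
  have h : ‖p‖^2 = (p 0)^2 + (p 1)^2 + (p 2)^2 := by
    rw [EuclideanSpace.norm_eq, Real.sq_sqrt (by positivity)]
    simp [Fin.sum_univ_three, sq_abs]
  exact_mod_cast congrArg (Complex.ofReal) h

lemma hA2 (p : EuclideanSpace ℝ (Fin 3)) :
    alphaDot p * alphaDot p = ((‖p‖ : ℂ))^2 • 1 := by
  rw [alphaDot_eq]
  ext i j
  fin_cases i <;> fin_cases j <;>
    simp [Matrix.mul_apply, Fin.sum_univ_four, normsq_eq, Matrix.one_apply,
      Matrix.vecHead, Matrix.vecTail] <;>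
    ring_nf <;> simp [Complex.I_sq] <;> ring_nf

lemma hAB (p : EuclideanSpace ℝ (Fin 3)) :
    alphaDot p * diracBeta = -(diracBeta * alphaDot p) := by
  rw [alphaDot_eq]
  ext i j
  fin_cases i <;> fin_cases j <;>
    simp [Matrix.mul_apply, Fin.sum_univ_four, diracBeta, Matrix.vecHead, Matrix.vecTail] <;> ring

lemma hB2 : diracBeta * diracBeta = 1 := by
  ext i j
  fin_cases i <;> fin_cases j <;>
    simp [Matrix.mul_apply, Fin.sum_univ_four, diracBeta, Matrix.one_apply,
      Matrix.vecHead, Matrix.vecTail]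

lemma lam_sq (p : EuclideanSpace ℝ (Fin 3)) : lam p ^ 2 = ‖p‖^2 + 1 :=
  Real.sq_sqrt (by positivity)

lemma lam_ge_one (p : EuclideanSpace ℝ (Fin 3)) : 1 ≤ lam p := by
  rw [show (1:ℝ) = Real.sqrt 1 by simp [Real.sqrt_one]]
  exact Real.sqrt_le_sqrt (by nlinarith [sq_nonneg ‖p‖])

lemma lam_pos (p : EuclideanSpace ℝ (Fin 3)) : 0 < lam p := lt_of_lt_of_le one_pos (lam_ge_one p)

lemma aplus_sq (p : EuclideanSpace ℝ (Fin 3)) : aplus p ^ 2 = (1 + 1 / lam p) / 2 := by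
  have := lam_pos p
  exact Real.sq_sqrt (by positivity)

lemma aminus_sq (p : EuclideanSpace ℝ (Fin 3)) : aminus p ^ 2 = (1 - 1 / lam p) / 2 := by
  have h := lam_ge_one p
  have : 1 / lam p ≤ 1 := by
    rw [div_le_one (lam_pos p)]; exact h
  exact Real.sq_sqrt (by linarith)

lemma ham2 (p : EuclideanSpace ℝ (Fin 3)) : aminus p^2 * (2 * lam p) = lam p - 1 := by
  have hl := lam_pos p
  rw [aminus_sq]; field_simp

lemma hap2 (p : EuclideanSpace ℝ (Fin 3)) : aplus p^2 * (2 * lam p) = lam p + 1 := by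
  have hl := lam_pos p
  rw [aplus_sq]; field_simp

/-- a₊ = (a₋/‖p‖) (λ + 1). -/
lemma key1 (p : EuclideanSpace ℝ (Fin 3)) (hp : p ≠ 0) :
    aplus p = (aminus p / ‖p‖) * (lam p + 1) := by
  have hn : 0 < ‖p‖ := norm_pos_iff.mpr hp
  have hl := lam_pos p
  have hl1 := lam_ge_one p
  have hap : 0 ≤ aplus p := Real.sqrt_nonneg _
  have ham : 0 ≤ aminus p := Real.sqrt_nonneg _
  have hsq : (aplus p)^2 = ((aminus p / ‖p‖) * (lam p + 1))^2 := by
    have hns : ‖p‖^2 = lam p^2 - 1 := by have := lam_sq p; linarith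
    have h1 := ham2 p
    have h2 := hap2 p
    field_simp
    nlinarith [h1, h2, hns, hl, sq_nonneg (lam p + 1)]
  have h2 : 0 ≤ (aminus p / ‖p‖) * (lam p + 1) := by positivity
  nlinarith [sq_nonneg (aplus p - (aminus p / ‖p‖) * (lam p + 1)),
    sq_nonneg (aplus p + (aminus p / ‖p‖) * (lam p + 1))]

/-- a₊² + (a₋/‖p‖)²‖p‖² = 1. -/
lemma key3 (p : EuclideanSpace ℝ (Fin 3)) (hp : p ≠ 0) :
    aplus p^2 + (aminus p / ‖p‖)^2 * ‖p‖^2 = 1 := by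
  have hn : 0 < ‖p‖ := norm_pos_iff.mpr hp
  have hl := lam_pos p
  have h1 := ham2 p
  have h2 := hap2 p
  have h3 : (aminus p / ‖p‖)^2 * ‖p‖^2 = aminus p ^ 2 := by
    field_simp
  rw [h3]
  nlinarith [h1, h2, hl]

/-- U(p)·(α·p + β)·U(p)⁻¹ = λ(p)·β : the Foldy–Wouthuysen unitary U(p) diagonalizes the
free Dirac symbol. -/
theorem Umat_diagonalizes (p : EuclideanSpace ℝ (Fin 3)) (hp : p ≠ 0) :
    Umat p * diracSym p * (Umat p)⁻¹ = (lam p : ℂ) • diracBeta := by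
  have hn : 0 < ‖p‖ := norm_pos_iff.mpr hp
  set a : ℂ := (aplus p : ℂ) with ha
  set c : ℂ := ((aminus p / ‖p‖ : ℝ) : ℂ) with hcdef
  set l : ℂ := (lam p : ℂ) with hl
  set n : ℂ := ((‖p‖ : ℂ))^2 with hndef
  -- scalar identities over ℂ
  have hk1 : a = c * (l + 1) := by
    rw [ha, hcdef, hl]
    exact_mod_cast congrArg Complex.ofReal (key1 p hp)
  have hns : n = l^2 - 1 := by
    have : ‖p‖^2 = lam p^2 - 1 := by have := lam_sq p; linarith
    rw [hndef, hl]
    exact_mod_cast congrArg Complex.ofReal this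
  have hk3 : a^2 + c^2 * n = 1 := by
    rw [ha, hcdef, hndef]
    exact_mod_cast congrArg Complex.ofReal (key3 p hp)
  -- matrix identities
  have h1 : diracBeta * alphaDot p * alphaDot p = n • diracBeta := by
    rw [mul_assoc, hA2 p, ← hndef, mul_smul_comm, mul_one]
  have h2 : diracBeta * alphaDot p * diracBeta = -(alphaDot p) := by
    rw [mul_assoc, hAB p, mul_neg, ← mul_assoc, hB2, one_mul]
  have hMM : (diracBeta * alphaDot p) * (diracBeta * alphaDot p) = (-n) • 1 := by
    calc (diracBeta * alphaDot p) * (diracBeta * alphaDot p)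
        = (diracBeta * alphaDot p * diracBeta) * alphaDot p := by
          rw [mul_assoc, mul_assoc, mul_assoc]
      _ = -(alphaDot p * alphaDot p) := by rw [h2, neg_mul]
      _ = (-n) • 1 := by rw [hA2 p, ← hndef, neg_smul]
  have hBBA : diracBeta * (diracBeta * alphaDot p) = alphaDot p := by
    rw [← mul_assoc, hB2, one_mul]
  have hU : Umat p = a • 1 + c • (diracBeta * alphaDot p) := rfl
  -- the inverse
  have hUV : Umat p * (a • 1 - c • (diracBeta * alphaDot p)) = 1 := by
    rw [hU]
    simp only [mul_sub, sub_mul, mul_add, add_mul, smul_mul_assoc, Matrix.mul_smul,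
      one_mul, mul_one, smul_smul]
    rw [hMM]
    simp only [smul_smul]
    match_scalars
    · linear_combination hk3
    · ring
  have hVU : (a • 1 - c • (diracBeta * alphaDot p)) * Umat p = 1 := by
    rw [hU]
    simp only [mul_sub, sub_mul, mul_add, add_mul, smul_mul_assoc, Matrix.mul_smul,
      one_mul, mul_one, smul_smul]
    rw [hMM]
    simp only [smul_smul]
    match_scalars
    · linear_combination hk3
    · ring
  have hinv : (Umat p)⁻¹ = a • 1 - c • (diracBeta * alphaDot p) :=
    Matrix.inv_eq_right_inv hUV
  -- the intertwining identity
  have hUD : Umat p * diracSym p = (l • diracBeta) * Umat p := by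
    have hD : diracSym p = alphaDot p + diracBeta := rfl
    rw [hU, hD]
    simp only [mul_add, add_mul, smul_mul_assoc, Matrix.mul_smul, one_mul, mul_one, smul_smul]
    rw [h1, h2, hBBA]
    simp only [smul_smul]
    match_scalars
    · linear_combination hk1
    · linear_combination c * hns + (1 - l) * hk1
  rw [hinv, hUD, mul_assoc, hUV, mul_one]

end
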